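/- Uniqueness of the target-entropy temperature: under the hypotheses that p : Fin n → ℝ is strictly positive and not uniform, the map α ↦ H(p^α) is strictly decreasing on (0, ∞); hence for each achievable entropy value E the solution α of H(p^α) = E is unique. -/

import Mathlib

open Finset Real Set

noncomputable def shannonEntropy {n : ℕ} (p : Fin n → ℝ) : ℝ :=
  -∑ i, p i * Real.log (p i)

noncomputable def tempered {n : ℕ} (p : Fin n → ℝ) (α : ℝ) : Fin n → ℝ :=
  fun i => p i ^ α / ∑ j, p j ^ α

private lemma skey_nonneg {a b u v : ℝ} (hab : a < b) :
    0 ≤ (u - v) * (Real.exp (b * u) * Real.exp (a * v) - Real.exp (a * u) * Real.exp (b * v)) := by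
  rcases lt_trichotomy u v with h | h | h
  · have h1 : b * u + a * v < a * u + b * v := by nlinarith
    have h2 : Real.exp (b * u) * Real.exp (a * v) < Real.exp (a * u) * Real.exp (b * v) := by
      rw [← Real.exp_add, ← Real.exp_add]; exact Real.exp_lt_exp.2 h1
    nlinarith
  · simp [h]
  · have h1 : a * u + b * v < b * u + a * v := by nlinarith
    have h2 : Real.exp (a * u) * Real.exp (b * v) < Real.exp (b * u) * Real.exp (a * v) := by
      rw [← Real.exp_add, ← Real.exp_add]; exact Real.exp_lt_exp.2 h1
    nlinarith

private lemma skey_pos {a b u v : ℝ} (hab : a < b) (huv : u ≠ v) :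
    0 < (u - v) * (Real.exp (b * u) * Real.exp (a * v) - Real.exp (a * u) * Real.exp (b * v)) := by
  rcases lt_trichotomy u v with h | h | h
  · have h1 : b * u + a * v < a * u + b * v := by nlinarith
    have h2 : Real.exp (b * u) * Real.exp (a * v) < Real.exp (a * u) * Real.exp (b * v) := by
      rw [← Real.exp_add, ← Real.exp_add]; exact Real.exp_lt_exp.2 h1
    nlinarith
  · exact absurd h huv
  · have h1 : a * u + b * v < b * u + a * v := by nlinarith
    have h2 : Real.exp (a * u) * Real.exp (b * v) < Real.exp (b * u) * Real.exp (a * v) := by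
      rw [← Real.exp_add, ← Real.exp_add]; exact Real.exp_lt_exp.2 h1
    nlinarith

/-- The map `α ↦ H(p^α)` is strictly decreasing on `(0, ∞)` when `p` is not
uniform; hence the target-entropy temperature is unique. -/
theorem target_entropy_temperature_unique {n : ℕ} (p : Fin n → ℝ)
    (hpos : ∀ i, 0 < p i) (hsum : ∑ i, p i = 1)
    (hnonunif : ∃ i j : Fin n, p i ≠ p j) :
    StrictAntiOn (fun α : ℝ => shannonEntropy (tempered p α)) (Set.Ioi 0) ∧
    ∀ E : ℝ, ∀ α ∈ Set.Ioi (0 : ℝ), ∀ β ∈ Set.Ioi (0 : ℝ),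
      shannonEntropy (tempered p α) = E →
      shannonEntropy (tempered p β) = E → α = β := by
  have hne : Nonempty (Fin n) := ⟨hnonunif.choose⟩
  set x : Fin n → ℝ := fun i => Real.log (p i) with hx
  set Z : ℝ → ℝ := fun α => ∑ i, Real.exp (α * x i) with hZdef
  set S : ℝ → ℝ := fun α => ∑ i, x i * Real.exp (α * x i) with hSdef
  set g : ℝ → ℝ := fun α => S α / Z α with hgdef
  have hZpos : ∀ α, 0 < Z α := fun α =>
    Finset.sum_pos (fun i _ => Real.exp_pos _) Finset.univ_nonempty
  have hrpow : ∀ (α : ℝ) (j : Fin n), p j ^ α = Real.exp (α * x j) := by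
    intro α j
    rw [Real.rpow_def_of_pos (hpos j), mul_comm]
  have htemp : ∀ (α : ℝ) (i : Fin n), tempered p α i = Real.exp (α * x i) / Z α := by
    intro α i
    simp only [tempered, hrpow, hZdef]
  -- entropy identity
  have hH : ∀ α : ℝ, shannonEntropy (tempered p α) = Real.log (Z α) - α * g α := by
    intro α
    have hterm : ∀ i, tempered p α i * Real.log (tempered p α i)
        = (α * (x i * Real.exp (α * x i)) - Real.log (Z α) * Real.exp (α * x i)) / Z α := by
      intro i
      rw [htemp α i, Real.log_div (Real.exp_ne_zero _) (hZpos α).ne', Real.log_exp]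
      field_simp
    simp only [shannonEntropy, hterm]
    rw [← Finset.sum_div, Finset.sum_sub_distrib, ← Finset.mul_sum, ← Finset.mul_sum]
    have hZne := (hZpos α).ne'
    simp only [hgdef, hSdef, hZdef] at *
    field_simp
    ring
  -- g strictly monotone
  have hgmono : ∀ a b : ℝ, a < b → g a < g b := by
    intro a b hab
    rw [hgdef]
    simp only
    rw [div_lt_div_iff₀ (hZpos a) (hZpos b), hSdef, hZdef]
    simp only [Finset.sum_mul_sum]
    set t : Fin n → Fin n → ℝ := fun i j =>
      x i * Real.exp (b * x i) * Real.exp (a * x j)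
        - x i * Real.exp (a * x i) * Real.exp (b * x j) with ht
    have key : 0 < ∑ i, ∑ j, (x i - x j) *
        (Real.exp (b * x i) * Real.exp (a * x j) - Real.exp (a * x i) * Real.exp (b * x j)) := by
      obtain ⟨i0, j0, hij⟩ := hnonunif
      have hxne : x i0 ≠ x j0 := fun h =>
        hij (by rw [← Real.exp_log (hpos i0), ← Real.exp_log (hpos j0)]; exact congrArg Real.exp h)
      refine Finset.sum_pos' (fun i _ => Finset.sum_nonneg fun j _ => skey_nonneg hab) ?_
      exact ⟨i0, Finset.mem_univ _,
        Finset.sum_pos' (fun j _ => skey_nonneg hab)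
          ⟨j0, Finset.mem_univ _, skey_pos hab hxne⟩⟩
    have hsplit : ∀ i j, (x i - x j) *
        (Real.exp (b * x i) * Real.exp (a * x j) - Real.exp (a * x i) * Real.exp (b * x j))
        = t i j + t j i := by
      intro i j; simp only [ht]; ring
    have hdouble : (∑ i, ∑ j, (x i - x j) *
        (Real.exp (b * x i) * Real.exp (a * x j) - Real.exp (a * x i) * Real.exp (b * x j)))
        = 2 * ∑ i, ∑ j, t i j := by
      simp only [hsplit, Finset.sum_add_distrib]
      rw [Finset.sum_comm (f := fun i j => t j i)]
      ring
    rw [hdouble] at key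
    have key2 : 0 < ∑ i, ∑ j, t i j := by linarith
    have hdiff : (∑ i, ∑ j, t i j)
        = (∑ i, ∑ j, x i * Real.exp (b * x i) * Real.exp (a * x j))
          - ∑ i, ∑ j, x i * Real.exp (a * x i) * Real.exp (b * x j) := by
      simp only [ht, Finset.sum_sub_distrib]
    rw [hdiff] at key2
    have := sub_pos.mp key2
    calc ∑ i, ∑ j, x i * Real.exp (a * x i) * Real.exp (b * x j)
        < ∑ i, ∑ j, x i * Real.exp (b * x i) * Real.exp (a * x j) := this
      _ = _ := by apply Finset.sum_congr rfl; intros; apply Finset.sum_congr rfl; intros; ring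
  -- derivative of log Z
  have hZderiv : ∀ α : ℝ, HasDerivAt Z (S α) α := by
    intro α
    rw [hZdef, hSdef]
    apply HasDerivAt.fun_sum
    intro i _
    have h := ((hasDerivAt_id α).mul_const (x i)).exp
    simpa [mul_comm] using h
  have hfderiv : ∀ α : ℝ, HasDerivAt (fun a => Real.log (Z a)) (g α) α := by
    intro α
    exact (hZderiv α).log (hZpos α).ne'
  have hanti : StrictAntiOn (fun α : ℝ => shannonEntropy (tempered p α)) (Set.Ioi 0) := by
    intro a ha b hb hab
    simp only
    rw [hH a, hH b]
    obtain ⟨c, hc, hc'⟩ := exists_hasDerivAt_eq_slope (fun t => Real.log (Z t)) g hab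
      (fun t _ => (hfderiv t).continuousAt.continuousWithinAt)
      (fun t _ => hfderiv t)
    have hba : (0:ℝ) < b - a := sub_pos.2 hab
    rw [eq_div_iff hba.ne'] at hc'
    have h2 : g c < g b := hgmono c b hc.2
    have h3 : g a < g b := hgmono a b hab
    have ha0 : (0:ℝ) < a := ha
    nlinarith [mul_lt_mul_of_pos_right h2 hba, mul_lt_mul_of_pos_left h3 ha0]
  refine ⟨hanti, ?_⟩
  intro E α hα β hβ h1 h2
  exact hanti.injOn hα hβ (h1.trans h2.symm)
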